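/- Let H be a Hermitian matrix on ℂ^d with orthonormal eigenbasis {|j⟩}_{j=1}^d and eigenvalues {e_j} whose spectrum has non-degenerate gaps. Then for any matrix B on ℂ^d and any unit vector |ψ⟩, writing B̄ := Σ_j |⟨j|ψ⟩|² ⟨j|B|j⟩, the temporal fluctuation ΔB := lim_{T→∞} (1/T) ∫₀^T |⟨ψ| e^{iHt} B e^{−iHt} |ψ⟩ − B̄|² dt exists and equals Σ_{j≠k} |⟨j|ψ⟩|² |⟨k|ψ⟩|² |⟨j|B|k⟩|². -/

import Mathlib

open scoped Matrix
open Filter Complex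

lemma avg_exp (δ : ℝ) :
    Filter.Tendsto (fun T : ℝ => (T : ℂ)⁻¹ * ∫ t in (0:ℝ)..T, Complex.exp (Complex.I * δ * t))
      Filter.atTop (nhds (if δ = 0 then 1 else 0)) := by
  by_cases h : δ = 0
  · rw [if_pos h]
    apply Filter.Tendsto.congr' ?_ (tendsto_const_nhds (x := (1:ℂ)))
    filter_upwards [eventually_ge_atTop (1:ℝ)] with T hT
    have hT0 : (T:ℂ) ≠ 0 := by
      simpa using (by linarith : T ≠ 0)
    simp [h, intervalIntegral.integral_const, inv_mul_cancel₀ hT0]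
  · rw [if_neg h]
    have hc : Complex.I * δ ≠ 0 := by simp [Complex.ext_iff, h]
    have key : ∀ T : ℝ, (T : ℂ)⁻¹ * ∫ t in (0:ℝ)..T, Complex.exp (Complex.I * δ * t)
        = (T : ℂ)⁻¹ * ((Complex.exp (Complex.I*δ*T) - 1) / (Complex.I*δ)) := by
      intro T
      rw [show (fun t : ℝ => Complex.exp (Complex.I * δ * t)) = fun t : ℝ => Complex.exp ((Complex.I * δ) * t) from rfl]
      rw [integral_exp_mul_complex hc]
      simp
    simp only [key]
    apply squeeze_zero_norm (a := fun T : ℝ => |T|⁻¹ * (2 / ‖Complex.I * (δ:ℂ)‖))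
    · intro T
      rw [norm_mul]
      gcongr
      · simp
      · rw [norm_div]
        gcongr
        calc ‖Complex.exp (Complex.I*δ*T) - 1‖ ≤ ‖Complex.exp (Complex.I*δ*T)‖ + ‖(1:ℂ)‖ := norm_sub_le _ _
        _ ≤ 2 := by
            rw [Complex.norm_exp]
            norm_num [Complex.mul_re]
    · have : Filter.Tendsto (fun T : ℝ => |T|⁻¹) atTop (nhds 0) := by
        exact (tendsto_inv_atTop_zero (𝕜 := ℝ)).comp tendsto_abs_atTop_atTop
      simpa using this.mul_const (2 / ‖Complex.I * (δ:ℂ)‖)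

lemma key_avg {N : Type*} [Fintype N] [DecidableEq N] (a : N → ℂ) (ω : N → ℝ)
    (hω : ∀ p q, a p ≠ 0 → a q ≠ 0 → ω p = ω q → p = q) :
    Filter.Tendsto (fun T : ℝ => T⁻¹ * ∫ t in (0:ℝ)..T,
        ‖∑ p, a p * Complex.exp (Complex.I * ω p * t)‖ ^ 2)
      Filter.atTop (nhds (∑ p, ‖a p‖ ^ 2)) := by
  set F : ℝ → ℂ := fun t => ∑ p, a p * Complex.exp (Complex.I * ω p * t) with hF
  set b : N × N → ℂ := fun pq => a pq.1 * (starRingEnd ℂ) (a pq.2) with hb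
  set δf : N × N → ℝ := fun pq => ω pq.1 - ω pq.2 with hδ
  have hGt : ∀ t : ℝ, ((‖F t‖ ^ 2 : ℝ) : ℂ)
      = ∑ pq : N × N, b pq * Complex.exp (Complex.I * δf pq * t) := by
    intro t
    have h1 : ((‖F t‖ ^ 2 : ℝ) : ℂ) = F t * (starRingEnd ℂ) (F t) := by
      rw [Complex.mul_conj, Complex.normSq_eq_norm_sq]
    rw [h1, hF]
    simp only [map_sum, map_mul, Finset.sum_mul_sum, ← Finset.sum_product']
    rw [Finset.sum_product]
    rw [Fintype.sum_prod_type]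
    refine Finset.sum_congr rfl fun p _ => Finset.sum_congr rfl fun q _ => ?_
    have h2 : (starRingEnd ℂ) (Complex.exp (Complex.I * ω q * t))
        = Complex.exp (-(Complex.I * ω q * t)) := by
      rw [← Complex.exp_conj]
      simp
    have h3 : (Complex.I * ((ω p - ω q : ℝ) : ℂ) * t) = (Complex.I * ω p * t) + (-(Complex.I * ω q * t)) := by
      push_cast; ring
    simp only [hb, hδ]
    rw [h2, h3, Complex.exp_add]
    ring
  have hB : Filter.Tendsto
      (fun T : ℝ => ∑ pq : N × N, b pq * ((T : ℂ)⁻¹ * ∫ t in (0:ℝ)..T, Complex.exp (Complex.I * δf pq * t)))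
      Filter.atTop (nhds (∑ pq : N × N, b pq * (if δf pq = 0 then 1 else 0))) := by
    exact tendsto_finset_sum _ fun pq _ => (avg_exp (δf pq)).const_mul (b pq)
  have hC : ∀ T : ℝ, ((T : ℂ))⁻¹ * ((∫ t in (0:ℝ)..T, ‖F t‖ ^ 2 : ℝ) : ℂ)
      = ∑ pq : N × N, b pq * ((T : ℂ)⁻¹ * ∫ t in (0:ℝ)..T, Complex.exp (Complex.I * δf pq * t)) := by
    intro T
    rw [← intervalIntegral.integral_ofReal]
    rw [intervalIntegral.integral_congr (fun t _ => hGt t)]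
    rw [intervalIntegral.integral_finset_sum (fun pq _ => (Continuous.intervalIntegrable (by continuity) _ _))]
    rw [Finset.mul_sum]
    refine Finset.sum_congr rfl fun pq _ => ?_
    rw [intervalIntegral.integral_const_mul]
    ring
  have hFval : (∑ pq : N × N, b pq * (if δf pq = 0 then 1 else 0))
      = ((∑ p, ‖a p‖ ^ 2 : ℝ) : ℂ) := by
    push_cast
    rw [Fintype.sum_prod_type]
    refine Finset.sum_congr rfl fun p _ => ?_
    rw [Finset.sum_eq_single p]
    · simp [hb, hδ, Complex.mul_conj, Complex.normSq_eq_norm_sq,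
        Complex.ofReal_pow]
    · intro q _ hq
      by_cases hap : a p = 0
      · simp [hb, hap]
      by_cases haq : a q = 0
      · simp [hb, haq]
      have : ω p ≠ ω q := fun hh => hq.symm (hω p q hap haq hh)
      rw [if_neg (by simpa [hδ, sub_eq_zero] using this), mul_zero]
    · intro hp; exact absurd (Finset.mem_univ p) hp
  have hΦ : Filter.Tendsto (fun T : ℝ => ((T : ℂ))⁻¹ * ((∫ t in (0:ℝ)..T, ‖F t‖ ^ 2 : ℝ) : ℂ))
      Filter.atTop (nhds ((∑ p, ‖a p‖ ^ 2 : ℝ) : ℂ)) := by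
    rw [← hFval] at *
    simpa only [← hC] using hB
  have := (Complex.continuous_re.tendsto _).comp hΦ
  simp only [Complex.ofReal_re] at this
  convert this using 2 with T
  rw [Function.comp_apply, ← Complex.ofReal_inv, ← Complex.ofReal_mul, Complex.ofReal_re]

theorem temporal_fluctuation_eq (d : ℕ)
    (H : Matrix (Fin d) (Fin d) ℂ) (hH : H.IsHermitian)
    (v : Fin d → (Fin d → ℂ))
    (hv : ∀ j k, star (v j) ⬝ᵥ v k = if j = k then 1 else 0)
    (e : Fin d → ℝ) (heig : ∀ j, H.mulVec (v j) = (e j : ℂ) • v j)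
    (hndg : ∀ j k j' k' : Fin d, j ≠ k → j' ≠ k' →
      e j - e k = e j' - e k' → j = j' ∧ k = k')
    (B : Matrix (Fin d) (Fin d) ℂ) (ψ : Fin d → ℂ) (hψ : star ψ ⬝ᵥ ψ = 1)
    (Bbar : ℂ)
    (hBbar : Bbar = ∑ j, (‖star (v j) ⬝ᵥ ψ‖ : ℂ) ^ 2 * (star (v j) ⬝ᵥ B.mulVec (v j))) :
    Filter.Tendsto
      (fun T : ℝ => T⁻¹ * ∫ t in (0 : ℝ)..T,
        ‖star ψ ⬝ᵥ ((NormedSpace.exp ((Complex.I * t) • H) * B *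
          NormedSpace.exp (-((Complex.I * t) • H))).mulVec ψ) - Bbar‖ ^ 2)
      Filter.atTop
      (nhds (∑ j, ∑ k, if j ≠ k then
        ‖star (v j) ⬝ᵥ ψ‖ ^ 2 * ‖star (v k) ⬝ᵥ ψ‖ ^ 2 * ‖star (v j) ⬝ᵥ B.mulVec (v k)‖ ^ 2
        else 0)) := by
  -- abbreviations
  set c : Fin d → ℂ := fun j => star (v j) ⬝ᵥ ψ with hcdef
  set M : Fin d → Fin d → ℂ := fun j k => star (v j) ⬝ᵥ B.mulVec (v k) with hMdef
  have hc : ∀ j, star (v j) ⬝ᵥ ψ = c j := fun j => rfl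
  have hMc : ∀ j k, star (v j) ⬝ᵥ B.mulVec (v k) = M j k := fun j k => rfl
  simp only [hc, hMc] at hBbar ⊢
  -- the unitary matrix of eigenvectors
  set W : Matrix (Fin d) (Fin d) ℂ := Matrix.of fun i j => v j i with hWdef
  have hWW : Wᴴ * W = 1 := by
    ext j k
    rw [Matrix.mul_apply, Matrix.one_apply, ← hv j k]
    simp only [hWdef, dotProduct, Matrix.conjTranspose_apply, Matrix.of_apply,
      Pi.star_apply, starRingEnd_apply]
  have hW1 : W * Wᴴ = 1 := mul_eq_one_comm.mp hWW
  have hUnit : IsUnit W := ⟨⟨W, Wᴴ, hW1, hWW⟩, rfl⟩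
  have hWinv : W⁻¹ = Wᴴ := Matrix.inv_eq_right_inv hW1
  have hHW : H * W = W * Matrix.diagonal (fun j => (e j : ℂ)) := by
    ext i j
    have h := congrFun (heig j) i
    simp only [Matrix.mulVec, dotProduct, Pi.smul_apply, smul_eq_mul] at h
    rw [Matrix.mul_diagonal, Matrix.mul_apply]
    simp only [hWdef, Matrix.of_apply]
    rw [h]; ring
  have hHd : H = W * Matrix.diagonal (fun j => (e j : ℂ)) * Wᴴ := by
    calc H = H * (W * Wᴴ) := by rw [hW1, mul_one]
    _ = (H * W) * Wᴴ := by rw [mul_assoc]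
    _ = W * Matrix.diagonal (fun j => (e j : ℂ)) * Wᴴ := by rw [hHW]
  have hexp : ∀ z : ℂ, NormedSpace.exp (z • H)
      = W * Matrix.diagonal (fun j => Complex.exp (z * e j)) * Wᴴ := by
    intro z
    have h1 : z • H = W * Matrix.diagonal (fun j => z * (e j : ℂ)) * W⁻¹ := by
      rw [hWinv, hHd]
      have hD : Matrix.diagonal (fun j => z * (e j : ℂ))
          = z • Matrix.diagonal (fun j => (e j : ℂ)) := by
        rw [← Matrix.diagonal_smul]
        congr 1
      rw [hD, mul_smul_comm, smul_mul_assoc]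
    rw [h1, Matrix.exp_conj W _ hUnit, Matrix.exp_diagonal, hWinv]
    have hE : NormedSpace.exp (fun j : Fin d => z * (e j : ℂ))
        = fun j => Complex.exp (z * e j) := by
      funext j
      simp [Pi.exp_def, ← Complex.exp_eq_exp_ℂ]
    rw [hE]
  -- expansion of the quadratic form
  have hφ : Wᴴ.mulVec ψ = c := by
    funext j
    show (Wᴴ.mulVec ψ) j = star (v j) ⬝ᵥ ψ
    simp only [hWdef, Matrix.mulVec, dotProduct, Matrix.conjTranspose_apply,
      Matrix.of_apply, Pi.star_apply, starRingEnd_apply]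
  have hM : ∀ j k, (Wᴴ * B * W) j k = M j k := by
    intro j k
    simp only [hMdef, Matrix.mul_apply, Matrix.conjTranspose_apply, hWdef, Matrix.of_apply,
      dotProduct, Matrix.mulVec, Pi.star_apply, starRingEnd_apply, Finset.sum_mul,
      Finset.mul_sum]
    rw [Finset.sum_comm]
    exact Finset.sum_congr rfl fun i _ => Finset.sum_congr rfl fun l _ => by ring
  have hexpand : ∀ Dp Dm : Fin d → ℂ,
      star ψ ⬝ᵥ ((W * Matrix.diagonal Dp * Wᴴ * B * (W * Matrix.diagonal Dm * Wᴴ)).mulVec ψ)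
      = ∑ j, ∑ k, (starRingEnd ℂ) (c j) * Dp j * M j k * Dm k * c k := by
    intro Dp Dm
    have hmat : W * Matrix.diagonal Dp * Wᴴ * B * (W * Matrix.diagonal Dm * Wᴴ)
        = W * (Matrix.diagonal Dp * (Wᴴ * B * W) * Matrix.diagonal Dm) * Wᴴ := by
      simp only [Matrix.mul_assoc]
    rw [hmat]
    rw [← Matrix.mulVec_mulVec, ← Matrix.mulVec_mulVec]
    rw [Matrix.dotProduct_mulVec]
    have hsφ : star ψ ᵥ* W = star c := by
      rw [← hφ, Matrix.star_mulVec, Matrix.conjTranspose_conjTranspose]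
    rw [hsφ, hφ]
    simp only [dotProduct, Matrix.mulVec, Matrix.diagonal_mul, Matrix.mul_diagonal,
      Pi.star_apply, Finset.mul_sum, hM, starRingEnd_apply]
    exact Finset.sum_congr rfl fun j _ => Finset.sum_congr rfl fun k _ => by ring
  -- the off-diagonal coefficients
  set a : Fin d × Fin d → ℂ := fun p =>
    if p.1 ≠ p.2 then (starRingEnd ℂ) (c p.1) * c p.2 * M p.1 p.2 else 0 with ha
  set ω : Fin d × Fin d → ℝ := fun p => e p.1 - e p.2 with hωdef
  have hω : ∀ p q, a p ≠ 0 → a q ≠ 0 → ω p = ω q → p = q := by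
    intro p q hp hq hpq
    have hp1 : p.1 ≠ p.2 := by
      intro h
      apply hp
      rw [ha]
      simp [h]
    have hq1 : q.1 ≠ q.2 := by
      intro h
      apply hq
      rw [ha]
      simp [h]
    simp only [hωdef] at hpq
    obtain ⟨h1, h2⟩ := hndg p.1 p.2 q.1 q.2 hp1 hq1 hpq
    exact Prod.ext h1 h2
  -- the pointwise identity
  have hf : ∀ t : ℝ,
      star ψ ⬝ᵥ ((NormedSpace.exp ((Complex.I * t) • H) * B *
        NormedSpace.exp (-((Complex.I * t) • H))).mulVec ψ) - Bbar
      = ∑ p : Fin d × Fin d, a p * Complex.exp (Complex.I * ω p * t) := by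
    intro t
    rw [show -((Complex.I * (t:ℂ)) • H) = (-(Complex.I * t)) • H by rw [neg_smul]]
    rw [hexp (Complex.I * t), hexp (-(Complex.I * t)), hexpand, hBbar]
    rw [Fintype.sum_prod_type]
    rw [← Finset.sum_sub_distrib]
    refine Finset.sum_congr rfl fun j _ => ?_
    have hdj : (‖c j‖ : ℂ) ^ 2 * M j j = ∑ k, if k = j then (‖c j‖ : ℂ) ^ 2 * M j j else 0 := by
      rw [Finset.sum_ite_eq' Finset.univ j (fun _ => (‖c j‖ : ℂ) ^ 2 * M j j)]
      simp
    rw [hdj, ← Finset.sum_sub_distrib]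
    refine Finset.sum_congr rfl fun k _ => ?_
    by_cases hjk : k = j
    · subst hjk
      rw [if_pos rfl]
      simp only [ha, hωdef, ne_eq, not_true_eq_false, if_false]
      have h1 : (starRingEnd ℂ) (c k) * c k = ((‖c k‖ : ℂ)) ^ 2 := by
        rw [mul_comm, Complex.mul_conj, Complex.normSq_eq_norm_sq]
        push_cast; ring
      have h2 : Complex.exp (Complex.I * t * e k) * Complex.exp (-(Complex.I * t) * e k) = 1 := by
        rw [← Complex.exp_add]
        rw [show Complex.I * t * e k + -(Complex.I * t) * e k = 0 by ring]
        exact Complex.exp_zero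
      rw [show (starRingEnd ℂ) (c k) * Complex.exp (Complex.I * t * e k) * M k k *
            Complex.exp (-(Complex.I * t) * e k) * c k
          = ((starRingEnd ℂ) (c k) * c k) *
            (Complex.exp (Complex.I * t * e k) * Complex.exp (-(Complex.I * t) * e k)) * M k k
          by ring, h1, h2]
      ring
    · rw [if_neg hjk]
      simp only [ha, hωdef, ne_eq]
      rw [if_pos (fun h => hjk h.symm)]
      have h2 : Complex.exp (Complex.I * t * e j) * Complex.exp (-(Complex.I * t) * e k)
          = Complex.exp (Complex.I * ((e j - e k : ℝ) : ℂ) * t) := by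
        rw [← Complex.exp_add]
        congr 1
        push_cast; ring
      rw [sub_zero, ← h2]
      ring
  -- put everything together
  have hkey := key_avg a ω hω
  have hval : (∑ p : Fin d × Fin d, ‖a p‖ ^ 2)
      = ∑ j, ∑ k, if j ≠ k then ‖c j‖ ^ 2 * ‖c k‖ ^ 2 * ‖M j k‖ ^ 2 else 0 := by
    rw [Fintype.sum_prod_type]
    refine Finset.sum_congr rfl fun j _ => Finset.sum_congr rfl fun k _ => ?_
    by_cases h : j = k
    · simp [ha, h]
    · rw [if_pos h, ha]
      simp only [ne_eq, if_pos h]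
      rw [norm_mul, norm_mul, RCLike.norm_conj]
      ring
  rw [hval] at hkey
  have hfun : (fun T : ℝ => T⁻¹ * ∫ t in (0 : ℝ)..T,
        ‖star ψ ⬝ᵥ ((NormedSpace.exp ((Complex.I * t) • H) * B *
          NormedSpace.exp (-((Complex.I * t) • H))).mulVec ψ) - Bbar‖ ^ 2)
      = (fun T : ℝ => T⁻¹ * ∫ t in (0:ℝ)..T,
        ‖∑ p : Fin d × Fin d, a p * Complex.exp (Complex.I * ω p * t)‖ ^ 2) := by
    funext T
    congr 1
    exact intervalIntegral.integral_congr fun t _ => by rw [hf t]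
  rw [hfun]
  exact hkey
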